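/- For the simplex T_n = conv{e_1, …, e_n, −𝟏} in ℝ^n, the covering radius with respect to ℤ^n equals μ_n(T_n) = n/2. -/

import Mathlib

open MeasureTheory Pointwise

/-- The integer lattice `ℤⁿ` viewed as a subset of `ℝⁿ`. -/
def intLattice (n : ℕ) : Set (EuclideanSpace ℝ (Fin n)) :=
  {x | ∀ j, ∃ m : ℤ, x j = (m : ℝ)}

/-- The `i`-th covering minimum `μ_i(K, ℤⁿ)` of a convex body `K ⊆ ℝⁿ`:
the least `μ > 0` such that `μK + ℤⁿ` meets every `(n-i)`-dimensional affine subspace.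
For `i = n` this is the covering radius. -/
noncomputable def covMin (n i : ℕ) (K : Set (EuclideanSpace ℝ (Fin n))) : ℝ :=
  sInf {μ : ℝ | 0 < μ ∧ ∀ L : AffineSubspace ℝ (EuclideanSpace ℝ (Fin n)),
    (L : Set (EuclideanSpace ℝ (Fin n))).Nonempty →
    Module.finrank ℝ L.direction = n - i →
    ((μ • K + intLattice n) ∩ (L : Set (EuclideanSpace ℝ (Fin n)))).Nonempty}

/-- The simplex `T_n = conv{e_1, …, e_n, -𝟏}`, where `𝟏 = (1, …, 1)`. -/
noncomputable def Tsimplex (n : ℕ) : Set (EuclideanSpace ℝ (Fin n)) :=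
  convexHull ℝ ((Set.range fun j : Fin n => EuclideanSpace.single j (1 : ℝ)) ∪
    {(WithLp.toLp 2 (fun _ => -1 : Fin n → ℝ) : EuclideanSpace ℝ (Fin n))})

/-- The covering radius of the simplex `T_n = conv{e_1, …, e_n, -𝟏}` with respect to `ℤⁿ`
equals `n/2`. -/

lemma finset_nat_sum_ge : ∀ (m : ℕ) (S : Finset ℕ), S.card = m → m * (m-1) ≤ 2 * ∑ a ∈ S, a := by
  intro m
  induction m with
  | zero => intro S h; simp
  | succ k ih =>
    intro S h
    have hne : S.Nonempty := Finset.card_pos.mp (by omega)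
    set M := S.max' hne with hM
    have hsub : S ⊆ Finset.range (M+1) := by
      intro a ha
      simp only [Finset.mem_range]
      have := S.le_max' a ha
      omega
    have hcard : k + 1 ≤ M + 1 := by
      have := Finset.card_le_card hsub
      simpa [h] using this
    have herase : (S.erase M).card = k := by
      rw [Finset.card_erase_of_mem (S.max'_mem hne)]; omega
    have hsum : ∑ a ∈ S, a = M + ∑ a ∈ S.erase M, a :=
      (Finset.add_sum_erase S _ (S.max'_mem hne)).symm
    have hK := ih (S.erase M) herase
    simp only [Nat.succ_sub_one]
    rcases k with _ | j
    · simp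
    · have h1 : (j+1) * j ≤ 2 * ∑ a ∈ S.erase M, a := by simpa using hK
      rw [hsum]
      nlinarith

lemma int_sum_ge {m : ℕ} (f : Fin m → ℤ) (hf : Function.Injective f) (h0 : ∀ i, 0 ≤ f i) :
    (m : ℤ) * (m - 1) ≤ 2 * ∑ i, f i := by
  set F : Fin m → ℕ := fun i => (f i).toNat with hF
  have hFinj : Function.Injective F := by
    intro i j hij
    apply hf
    have := congrArg (fun x : ℕ => (x : ℤ)) hij
    simpa [hF, Int.toNat_of_nonneg (h0 i), Int.toNat_of_nonneg (h0 j)] using this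
  have hfF : ∀ i, f i = (F i : ℤ) := fun i => (Int.toNat_of_nonneg (h0 i)).symm
  have hcard : (Finset.image F Finset.univ).card = m := by
    rw [Finset.card_image_of_injective _ hFinj, Finset.card_univ, Fintype.card_fin]
  have key := finset_nat_sum_ge m _ hcard
  have hsum : ∑ a ∈ Finset.image F Finset.univ, a = ∑ i, F i :=
    Finset.sum_image (fun i _ j _ h => hFinj h)
  rw [hsum] at key
  have : (m * (m-1) : ℕ) ≤ (2 * ∑ i, F i : ℕ) := key
  have hcast := Int.ofNat_le.mpr this
  push_cast at hcast
  rcases Nat.eq_zero_or_pos m with h | h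
  · subst h; simp
  · have hm1 : ((m:ℤ) - 1) = ((m - 1 : ℕ) : ℤ) := by
      have : 1 ≤ m := h; push_cast [this]; ring
    rw [hm1]
    calc ((m:ℤ)) * ((m-1:ℕ):ℤ) = ((m * (m-1) : ℕ) : ℤ) := by push_cast; ring
    _ ≤ ((2 * ∑ i, F i : ℕ) : ℤ) := Int.ofNat_le.mpr this
    _ = 2 * ∑ i, f i := by push_cast [hfF]; ring


lemma double_count {n : ℕ} (β : Fin n → ℝ) :
    2 * ∑ j, (Finset.univ.filter (fun i => β i < β j)).card ≤ n * n - n := by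
  have h1 : ∀ j : Fin n, (Finset.univ.filter (fun i => β i < β j)).card
      = ∑ i, if β i < β j then 1 else 0 := by
    intro j; rw [Finset.card_filter]
  have hswap : (∑ j, ∑ i, if β i < β j then (1:ℕ) else 0)
      = ∑ j, ∑ i, if β j < β i then (1:ℕ) else 0 := Finset.sum_comm
  have key : (∑ j, ∑ i, ((if β i < β j then (1:ℕ) else 0) + (if β j < β i then (1:ℕ) else 0)))
      ≤ ∑ j : Fin n, ∑ i : Fin n, (if i = j then 0 else 1) := by
    apply Finset.sum_le_sum; intro j _
    apply Finset.sum_le_sum; intro i _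
    by_cases hij : i = j
    · subst hij; simp [lt_irrefl]
    · simp only [hij, if_false]
      split_ifs with h h'
      · exact absurd h' (not_lt_of_gt h)
      all_goals omega
  have hrow : ∀ j : Fin n, (∑ i : Fin n, if i = j then (0:ℕ) else 1) = n - 1 := by
    intro j
    have hA : (∑ i : Fin n, ((if i = j then (0:ℕ) else 1) + (if i = j then 1 else 0))) = n := by
      have : ∀ i : Fin n, ((if i = j then (0:ℕ) else 1) + (if i = j then 1 else 0)) = 1 := by
        intro i; split_ifs <;> rfl
      simp [this]
    have hB : (∑ i : Fin n, if i = j then (1:ℕ) else 0) = 1 := by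
      rw [Finset.sum_ite_eq' Finset.univ j (fun _ => (1:ℕ))]; simp
    rw [Finset.sum_add_distrib, hB] at hA
    omega
  have hrhs : (∑ j : Fin n, ∑ i : Fin n, if i = j then (0:ℕ) else 1) = n * (n-1) := by
    simp [hrow, Finset.sum_const]
  have hn1 : n * (n - 1) ≤ n * n - n := by
    cases n with
    | zero => simp
    | succ k =>
      have h' : (k+1)*(k+1) = (k+1)*k + (k+1) := by ring
      have h'' : (k+1) * (k+1-1) = (k+1)*k := by simp
      omega
  calc 2 * ∑ j, (Finset.univ.filter (fun i => β i < β j)).card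
      = (∑ j, ∑ i, if β i < β j then (1:ℕ) else 0) + ∑ j, ∑ i, (if β j < β i then (1:ℕ) else 0) := by
        rw [two_mul, ← hswap]
        congr 1 <;> exact Finset.sum_congr rfl (fun j _ => h1 j)
    _ = ∑ j, ∑ i, ((if β i < β j then (1:ℕ) else 0) + (if β j < β i then (1:ℕ) else 0)) := by
        rw [← Finset.sum_add_distrib]
        exact Finset.sum_congr rfl (fun j _ => (Finset.sum_add_distrib).symm)
    _ ≤ ∑ j : Fin n, ∑ i : Fin n, (if i = j then 0 else 1) := key
    _ = n * (n-1) := hrhs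
    _ ≤ n * n - n := hn1

lemma exists_round (n : ℕ) (hn : 1 ≤ n) (y : Fin n → ℝ) :
    ∃ z : Fin n → ℤ, (∑ i, (y i - (z i : ℝ))) ≤ (n:ℝ)/2 ∧
      ∀ j, (∑ i, (y i - (z i : ℝ))) ≤ (n:ℝ)/2 + ((n:ℝ)+1) * (y j - (z j : ℝ)) := by
  set β : Fin n → ℝ := fun i => y i - ⌈y i⌉ with hβ
  have hβ0 : ∀ i, β i ≤ 0 := fun i => by
    have := Int.le_ceil (y i); simp [hβ]; linarith
  have hβ1 : ∀ i, -1 < β i := fun i => by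
    have := Int.ceil_lt_add_one (y i); simp [hβ]; linarith
  set B : ℝ := ∑ i, β i with hB
  clear_value β B
  have main : ∃ τ : ℝ, τ ≤ 0 ∧
      B + ((Finset.univ.filter (fun i => β i < τ)).card : ℝ) ≤ (n:ℝ)/2 + ((n:ℝ)+1) * τ := by
    by_cases hc : B + ((Finset.univ.filter (fun i => β i < 0)).card : ℝ) ≤ (n:ℝ)/2
    · exact ⟨0, le_refl 0, by simpa using hc⟩
    · push_neg at hc
      by_contra hno
      push_neg at hno
      have hsumlt := Finset.sum_lt_sum_of_nonempty
        (show (Finset.univ : Finset (Fin n)).Nonempty by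
          rw [Finset.univ_nonempty_iff]; exact Fin.pos_iff_nonempty.mp (by omega))
        (fun j (_ : j ∈ Finset.univ) => hno (β j) (hβ0 j))
      have hL : (∑ _j : Fin n, ((n:ℝ)/2 + ((n:ℝ)+1) * β _j)) = (n:ℝ)*((n:ℝ)/2) + ((n:ℝ)+1)*B := by
        rw [Finset.sum_add_distrib, Finset.sum_const, Finset.card_univ, Fintype.card_fin,
          nsmul_eq_mul, hB, Finset.mul_sum]
      have hR : (∑ j : Fin n, (B + ((Finset.univ.filter (fun i => β i < β j)).card : ℝ)))
          = (n:ℝ)*B + ∑ j : Fin n, ((Finset.univ.filter (fun i => β i < β j)).card : ℝ) := by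
        rw [Finset.sum_add_distrib, Finset.sum_const, Finset.card_univ, Fintype.card_fin,
          nsmul_eq_mul]
      have hdc := double_count β
      have hdc' : (∑ j : Fin n, ((Finset.univ.filter (fun i => β i < β j)).card : ℝ))
          ≤ ((n:ℝ) * n - n) / 2 := by
        have h2 : ((2 * ∑ j, (Finset.univ.filter (fun i => β i < β j)).card : ℕ) : ℝ)
            ≤ ((n * n - n : ℕ) : ℝ) := Nat.cast_le.mpr hdc
        have hnn : (n : ℕ) ≤ n * n := Nat.le_mul_of_pos_left n (by omega)
        push_cast [hnn] at h2
        linarith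
      have hc0 : ((Finset.univ.filter (fun i => β i < 0)).card : ℝ) ≤ (n:ℝ) := by
        have := Finset.card_filter_le (Finset.univ : Finset (Fin n)) (fun i => β i < 0)
        have h' : (Finset.univ : Finset (Fin n)).card = n := by
          rw [Finset.card_univ, Fintype.card_fin]
        exact_mod_cast h' ▸ this
      rw [hL, hR] at hsumlt
      linarith
  obtain ⟨τ, hτ0, hτ⟩ := main
  have hx : ∀ i, y i - ((⌈y i⌉ - (if β i < τ then (1:ℤ) else 0) : ℤ) : ℝ)
      = β i + (if β i < τ then (1:ℝ) else 0) := by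
    intro i
    by_cases h : β i < τ
    · rw [if_pos h, if_pos h]
      push_cast
      simp only [hβ]
      ring
    · rw [if_neg h, if_neg h]
      push_cast
      simp only [hβ]
      ring
  have hxsum : (∑ i, (y i - ((⌈y i⌉ - (if β i < τ then (1:ℤ) else 0) : ℤ) : ℝ)))
      = B + ((Finset.univ.filter (fun i => β i < τ)).card : ℝ) := by
    simp only [hx]
    rw [Finset.sum_add_distrib, Finset.sum_boole, ← hB]
  have hτneg : ((n:ℝ)+1) * τ ≤ 0 :=
    mul_nonpos_of_nonneg_of_nonpos (by positivity) hτ0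
  refine ⟨fun i => ⌈y i⌉ - (if β i < τ then 1 else 0), ?_, ?_⟩
  · rw [hxsum]; linarith
  · intro j
    rw [hxsum, hx j]
    by_cases h : β j < τ
    · rw [if_pos h]
      have h1 : τ ≤ β j + 1 := by have := hβ1 j; linarith
      have h2 := mul_le_mul_of_nonneg_left h1 (show (0:ℝ) ≤ (n:ℝ)+1 by positivity)
      linarith
    · rw [if_neg h]
      have h1 : τ ≤ β j := le_of_not_gt h
      have h2 := mul_le_mul_of_nonneg_left h1 (show (0:ℝ) ≤ (n:ℝ)+1 by positivity)
      have h3 : ((n:ℝ)+1) * (β j + 0) = ((n:ℝ)+1) * β j := by ring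
      rw [h3]
      linarith

lemma sum_fin_cast (n : ℕ) : (2:ℤ) * ∑ j : Fin n, ((j:ℕ):ℤ) = (n:ℤ) * ((n:ℤ) - 1) := by
  have h := Finset.sum_range_id_mul_two n
  have hcast : ((∑ i ∈ Finset.range n, i : ℕ) : ℤ) = ∑ j : Fin n, ((j:ℕ):ℤ) := by
    rw [← Fin.sum_univ_eq_sum_range (fun i => (i:ℕ))]
    push_cast
    rfl
  have h2 : ((∑ i ∈ Finset.range n, i) * 2 : ℕ) = (n * (n-1) : ℕ) := h
  have h3 := congrArg (fun x : ℕ => (x:ℤ)) h2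
  push_cast at h3
  rcases Nat.eq_zero_or_pos n with h0 | h0
  · subst h0; simp
  · have : ((n - 1 : ℕ) : ℤ) = (n:ℤ) - 1 := by
      have : 1 ≤ n := h0
      push_cast [this]; ring
    have h4 : ((∑ i ∈ Finset.range n, i : ℕ):ℤ) * 2 = (n:ℤ) * ((n:ℤ)-1) := by
      rw [← this]
      exact_mod_cast h2
    rw [← hcast]
    linarith

lemma deep_hole (n : ℕ) (hn : 1 ≤ n) {μ : ℝ} (hμ : μ < (n:ℝ)/2) (z : Fin n → ℤ)
    (h1 : (∑ i : Fin n, ((((i:ℕ):ℝ)+1)/((n:ℝ)+1) - (z i : ℝ))) ≤ μ)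
    (h2 : ∀ j : Fin n, (∑ i : Fin n, ((((i:ℕ):ℝ)+1)/((n:ℝ)+1) - (z i : ℝ)))
        ≤ μ + ((n:ℝ)+1) * ((((j:ℕ):ℝ)+1)/((n:ℝ)+1) - (z j : ℝ))) : False := by
  have hn1 : ((n:ℝ)+1) ≠ 0 := by positivity
  set Z : ℤ := ∑ i, z i with hZ
  -- the sum of p equals n/2
  have hps : (∑ i : Fin n, ((((i:ℕ):ℝ)+1)/((n:ℝ)+1))) = (n:ℝ)/2 := by
    rw [← Finset.sum_div, div_eq_div_iff hn1 (two_ne_zero)]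
    have h2' : (2:ℝ) * ∑ j : Fin n, ((j:ℕ):ℝ) = (n:ℝ) * ((n:ℝ) - 1) := by
      exact_mod_cast congrArg (fun x : ℤ => (x:ℝ)) (sum_fin_cast n)
    rw [Finset.sum_add_distrib, Finset.sum_const, Finset.card_univ, Fintype.card_fin,
      nsmul_eq_mul, mul_one]
    nlinarith [h2']
  have hsum : (∑ i : Fin n, ((((i:ℕ):ℝ)+1)/((n:ℝ)+1) - (z i : ℝ))) = (n:ℝ)/2 - (Z:ℝ) := by
    rw [Finset.sum_sub_distrib, hps, hZ]
    push_cast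
    ring
  set g : Fin (n+1) → ℤ := Fin.cases 0 z with hg
  set a : Fin (n+1) → ℤ := fun j => Z + ((j:ℕ):ℤ) - ((n:ℤ)+1) * g j with ha
  have ha1 : ∀ j, 1 ≤ a j := by
    intro j
    have hcast : (0:ℝ) < ((a j : ℤ) : ℝ) → 1 ≤ a j := by
      intro h
      have : (0:ℤ) < a j := by exact_mod_cast h
      omega
    apply hcast
    induction j using Fin.cases with
    | zero =>
      have : (a 0 : ℝ) = (Z:ℝ) := by
        simp [ha, hg]
      rw [this]
      rw [hsum] at h1
      linarith
    | succ i =>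
      have hz : g i.succ = z i := by simp [hg]
      have : ((a i.succ : ℤ) : ℝ) = (Z:ℝ) + (((i:ℕ):ℝ)+1) - ((n:ℝ)+1) * (z i : ℝ) := by
        have h' : a i.succ = Z + ((i:ℕ):ℤ) + 1 - ((n:ℤ)+1) * z i := by
          simp only [ha]
          rw [hz]
          push_cast [Fin.val_succ]
          ring
        rw [h']
        push_cast
        ring
      rw [this]
      have hj := h2 i
      rw [hsum] at hj
      have hexp : ((n:ℝ)+1) * ((((i:ℕ):ℝ)+1)/((n:ℝ)+1) - (z i : ℝ))
          = (((i:ℕ):ℝ)+1) - ((n:ℝ)+1) * (z i : ℝ) := by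
        field_simp
      rw [hexp] at hj
      linarith
  have hainj : Function.Injective a := by
    intro i j hij
    simp only [ha] at hij
    have hd : ((i:ℕ):ℤ) - ((j:ℕ):ℤ) = ((n:ℤ)+1) * (g i - g j) := by ring_nf; linarith [hij]
    have hi := i.is_lt
    have hj := j.is_lt
    have hbound : |((i:ℕ):ℤ) - ((j:ℕ):ℤ)| ≤ (n:ℤ) := by
      rw [abs_le]; constructor <;> [skip; skip] <;> push_cast <;> omega
    rcases lt_trichotomy (g i - g j) 0 with hlt | heq | hgt
    · exfalso
      have : ((n:ℤ)+1) * (g i - g j) ≤ -((n:ℤ)+1) := by nlinarith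
      rw [← hd] at this
      have := abs_le.mp hbound
      omega
    · have : ((i:ℕ):ℤ) = ((j:ℕ):ℤ) := by rw [sub_eq_zero] at heq; rw [heq] at hd; omega
      exact Fin.ext (by exact_mod_cast this)
    · exfalso
      have : ((n:ℤ)+1) ≤ ((n:ℤ)+1) * (g i - g j) := by nlinarith
      rw [← hd] at this
      have := abs_le.mp hbound
      omega
  have hgsum : (∑ j : Fin (n+1), g j) = Z := by
    rw [Fin.sum_univ_succ]
    simp [hg, hZ]
  have hasum : 2 * (∑ j, a j) = ((n:ℤ)+1) * (n:ℤ) := by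
    simp only [ha]
    rw [Finset.sum_sub_distrib, Finset.sum_add_distrib, Finset.sum_const, Finset.card_univ,
      Fintype.card_fin, nsmul_eq_mul, ← Finset.mul_sum, hgsum]
    have := sum_fin_cast (n+1)
    push_cast at this ⊢
    nlinarith [this]
  have key := int_sum_ge (fun j => a j - 1)
    (fun i j hij => hainj (by have h' : a i - 1 = a j - 1 := hij; omega))
    (fun i => by have := ha1 i; show 0 ≤ a i - 1; omega)
  have hsub : (∑ j : Fin (n+1), (a j - 1)) = (∑ j, a j) - ((n:ℤ)+1) := by
    rw [Finset.sum_sub_distrib, Finset.sum_const, Finset.card_univ, Fintype.card_fin]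
    push_cast
    ring
  rw [hsub] at key
  push_cast at key
  nlinarith [key, hasum]

lemma mem_smul_Tsimplex {n : ℕ} {μ : ℝ} (hμ : 0 < μ) (x : EuclideanSpace ℝ (Fin n)) :
    x ∈ μ • Tsimplex n ↔ (∑ j, x j) ≤ μ ∧ ∀ j, (∑ k, x k) ≤ μ + ((n:ℝ)+1) * x j := by
  have hT : μ • Tsimplex n = convexHull ℝ (μ • ((Set.range fun j : Fin n => EuclideanSpace.single j (1 : ℝ)) ∪
      {(WithLp.toLp 2 (fun _ => -1 : Fin n → ℝ) : EuclideanSpace ℝ (Fin n))})) := by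
    rw [Tsimplex, convexHull_smul]
  constructor
  · intro hx
    rw [hT] at hx
    set H : Set (EuclideanSpace ℝ (Fin n)) :=
      {y | (∑ j, y j) ≤ μ ∧ ∀ j, (∑ k, y k) ≤ μ + ((n:ℝ)+1) * y j} with hH
    have hconv : Convex ℝ H := by
      intro u hu v hv a b ha hb hab
      have happ : ∀ j, (a • u + b • v) j = a * u j + b * v j := fun j => rfl
      have hsum : (∑ j, (a • u + b • v) j) = a * (∑ j, u j) + b * (∑ j, v j) := by
        simp only [happ, Finset.sum_add_distrib, Finset.mul_sum]
      constructor
      · rw [hsum]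
        have g1 : a * (∑ j, u j) ≤ a * μ := mul_le_mul_of_nonneg_left hu.1 ha
        have g2 : b * (∑ j, v j) ≤ b * μ := mul_le_mul_of_nonneg_left hv.1 hb
        nlinarith
      · intro j
        show (∑ k, (a • u + b • v) k) ≤ μ + ((n:ℝ)+1) * (a • u + b • v) j
        rw [hsum, happ]
        have g1 : a * (∑ k, u k) ≤ a * (μ + ((n:ℝ)+1) * u j) := mul_le_mul_of_nonneg_left (hu.2 j) ha
        have g2 : b * (∑ k, v k) ≤ b * (μ + ((n:ℝ)+1) * v j) := mul_le_mul_of_nonneg_left (hv.2 j) hb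
        nlinarith
    have hVsub : μ • ((Set.range fun j : Fin n => EuclideanSpace.single j (1 : ℝ)) ∪
        {(WithLp.toLp 2 (fun _ => -1 : Fin n → ℝ) : EuclideanSpace ℝ (Fin n))}) ⊆ H := by
      rintro y ⟨v, hv, rfl⟩
      rcases hv with ⟨i, rfl⟩ | hv
      · have happ : ∀ j, (μ • EuclideanSpace.single i (1:ℝ)) j = if j = i then μ else 0 := by
          intro j
          show μ * (EuclideanSpace.single i (1:ℝ)) j = _
          rw [EuclideanSpace.single_apply]
          by_cases h : j = i <;> simp [h]
        have hsum : (∑ j, (μ • EuclideanSpace.single i (1:ℝ)) j) = μ := by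
          simp [happ]
        constructor
        · show (∑ j, (μ • EuclideanSpace.single i (1:ℝ)) j) ≤ μ
          rw [hsum]
        · intro j
          show (∑ k, (μ • EuclideanSpace.single i (1:ℝ)) k) ≤ μ + ((n:ℝ)+1) * (μ • EuclideanSpace.single i (1:ℝ)) j
          rw [hsum, happ]
          split_ifs with h
          · nlinarith [Nat.cast_nonneg (α := ℝ) n]
          · simp
      · simp only [Set.mem_singleton_iff] at hv
        subst hv
        have happ : ∀ j, (μ • (WithLp.toLp 2 (fun _ => -1 : Fin n → ℝ) : EuclideanSpace ℝ (Fin n))) j = -μ := by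
          intro j; show μ * (-1) = -μ; ring
        have hsum : (∑ j, (μ • (WithLp.toLp 2 (fun _ => -1 : Fin n → ℝ) : EuclideanSpace ℝ (Fin n))) j) = -((n:ℝ) * μ) := by
          simp only [happ, Finset.sum_const, Finset.card_univ, Fintype.card_fin, nsmul_eq_mul]
          ring
        constructor
        · show (∑ j, (μ • (WithLp.toLp 2 (fun _ => -1 : Fin n → ℝ) : EuclideanSpace ℝ (Fin n))) j) ≤ μ
          rw [hsum]; nlinarith [Nat.cast_nonneg (α := ℝ) n]
        · intro j
          show (∑ k, (μ • (WithLp.toLp 2 (fun _ => -1 : Fin n → ℝ) : EuclideanSpace ℝ (Fin n))) k) ≤ μ + ((n:ℝ)+1) * (μ • (WithLp.toLp 2 (fun _ => -1 : Fin n → ℝ) : EuclideanSpace ℝ (Fin n))) j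
          rw [hsum, happ]
          nlinarith [Nat.cast_nonneg (α := ℝ) n]
    exact convexHull_min hVsub hconv hx
  · rintro ⟨h1, h2⟩
    rw [hT]
    set s : ℝ := ∑ j, x j with hs
    set t : ℝ := (μ - s) / ((n:ℝ)+1) with ht
    have hn1 : (0:ℝ) < (n:ℝ)+1 := by positivity
    have hsum2 : ((n:ℝ)+1) * t = μ - s := by rw [ht]; field_simp
    have ht0 : 0 ≤ t := div_nonneg (by linarith) hn1.le
    have hxt : ∀ j, -t ≤ x j := by
      intro j
      rw [ht, ← neg_div, div_le_iff₀ hn1]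
      have := h2 j
      nlinarith
    set w : Option (Fin n) → ℝ := fun o => Option.elim o (t / μ) (fun j => (x j + t) / μ) with hw
    set z : Option (Fin n) → EuclideanSpace ℝ (Fin n) := fun o =>
      Option.elim o (μ • (WithLp.toLp 2 (fun _ => -1 : Fin n → ℝ) : EuclideanSpace ℝ (Fin n))) (fun j => μ • EuclideanSpace.single j (1:ℝ)) with hz
    have hw0 : ∀ i ∈ Finset.univ, 0 ≤ w (i : Option (Fin n)) := by
      rintro (_ | j) -
      · exact div_nonneg ht0 hμ.le
      · exact div_nonneg (by linarith [hxt j]) hμ.le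
    have hxsum : ∑ j : Fin n, (x j + t) = s + (n:ℝ) * t := by
      rw [Finset.sum_add_distrib, Finset.sum_const, Finset.card_univ, Fintype.card_fin, nsmul_eq_mul, hs]
    have hwsum : ∑ i, w i = 1 := by
      rw [Fintype.sum_option]
      show t / μ + (∑ j : Fin n, (x j + t) / μ) = 1
      rw [← Finset.sum_div, hxsum, ← add_div, div_eq_one_iff_eq hμ.ne']
      linarith
    have hzm : ∀ i ∈ Finset.univ, z i ∈ μ • ((Set.range fun j : Fin n => EuclideanSpace.single j (1 : ℝ)) ∪
        {(WithLp.toLp 2 (fun _ => -1 : Fin n → ℝ) : EuclideanSpace ℝ (Fin n))}) := by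
      rintro (_ | j) -
      · exact ⟨_, Or.inr rfl, rfl⟩
      · exact ⟨_, Or.inl ⟨j, rfl⟩, rfl⟩
    have hcm : Finset.univ.centerMass w z = x := by
      rw [Finset.centerMass_eq_of_sum_1 _ _ hwsum]
      apply PiLp.ext
      intro j
      have happly : (∑ i, w i • z i) j = ∑ i, w i * (z i) j := by
        rw [WithLp.ofLp_sum, Finset.sum_apply]
        rfl
      rw [happly, Fintype.sum_option]
      show w none * (μ * (-1)) + (∑ i : Fin n, w (some i) * (μ * (EuclideanSpace.single i (1:ℝ)) j)) = x j
      have : ∀ i : Fin n, w (some i) * (μ * (EuclideanSpace.single i (1:ℝ)) j)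
          = if j = i then (x i + t) else 0 := by
        intro i
        rw [EuclideanSpace.single_apply]
        by_cases h : j = i <;> simp [h, hw]
        field_simp
      rw [Finset.sum_congr rfl (fun i _ => this i), Finset.sum_ite_eq Finset.univ j]
      simp only [Finset.mem_univ, if_true]
      show t / μ * (μ * (-1)) + (x j + t) = x j
      field_simp
      ring
    rw [← hcm]
    exact Finset.centerMass_mem_convexHull Finset.univ hw0 (by rw [hwsum]; norm_num) hzm

theorem covering_radius_Tsimplex (n : ℕ) (hn : 1 ≤ n) :
    covMin n n (Tsimplex n) = (n : ℝ) / 2 := by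
  have hnpos : (0:ℝ) < (n:ℝ)/2 := by
    have : (1:ℝ) ≤ (n:ℝ) := by exact_mod_cast hn
    linarith
  have hhalf_mem : ((n:ℝ)/2) ∈ {μ : ℝ | 0 < μ ∧ ∀ L : AffineSubspace ℝ (EuclideanSpace ℝ (Fin n)),
      (L : Set (EuclideanSpace ℝ (Fin n))).Nonempty →
      Module.finrank ℝ L.direction = n - n →
      ((μ • Tsimplex n + intLattice n) ∩ (L : Set (EuclideanSpace ℝ (Fin n)))).Nonempty} := by
    refine ⟨hnpos, fun L hLne _ => ?_⟩
    obtain ⟨pt, hpt⟩ := hLne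
    refine ⟨pt, ?_, hpt⟩
    obtain ⟨z, hz1, hz2⟩ := exists_round n hn (fun i => pt i)
    set b : EuclideanSpace ℝ (Fin n) := WithLp.toLp 2 (fun j => (z j : ℝ)) with hb
    have hbmem : b ∈ intLattice n := fun j => ⟨z j, rfl⟩
    have hamem : pt - b ∈ ((n:ℝ)/2) • Tsimplex n := by
      rw [mem_smul_Tsimplex hnpos]
      have happ : ∀ j, (pt - b) j = pt j - (z j : ℝ) := fun j => rfl
      constructor
      · rw [Finset.sum_congr rfl (fun j _ => happ j)]
        exact hz1
      · intro j
        rw [Finset.sum_congr rfl (fun k _ => happ k), happ j]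
        exact hz2 j
    have : (pt - b) + b = pt := by abel
    rw [← this]
    exact Set.add_mem_add hamem hbmem
  rw [covMin]
  apply le_antisymm
  · exact csInf_le ⟨0, fun μ hμ => hμ.1.le⟩ hhalf_mem
  · apply le_csInf ⟨_, hhalf_mem⟩
    rintro μ ⟨hμpos, hcov⟩
    by_contra hlt
    push_neg at hlt
    set p : EuclideanSpace ℝ (Fin n) := WithLp.toLp 2 (fun j : Fin n => (((j:ℕ):ℝ)+1)/((n:ℝ)+1)) with hp
    have hrank : Module.finrank ℝ (affineSpan ℝ ({p} : Set (EuclideanSpace ℝ (Fin n)))).direction = n - n := by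
      rw [direction_affineSpan, vectorSpan_singleton, Nat.sub_self, finrank_bot]
    obtain ⟨q, hq1, hq2⟩ := hcov (affineSpan ℝ {p})
      ⟨p, subset_affineSpan ℝ {p} rfl⟩ hrank
    rw [SetLike.mem_coe, AffineSubspace.mem_affineSpan_singleton] at hq2
    rw [hq2] at hq1
    obtain ⟨aa, haa, bb, hbb, habp⟩ := Set.mem_add.mp hq1
    set z : Fin n → ℤ := fun j => (hbb j).choose with hz
    have hzj : ∀ j, bb j = ((z j : ℤ) : ℝ) := fun j => (hbb j).choose_spec
    have haj : ∀ j, aa j = (((j:ℕ):ℝ)+1)/((n:ℝ)+1) - ((z j : ℤ) : ℝ) := by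
      intro j
      have h' : aa j + bb j = p j := congrArg (fun v : EuclideanSpace ℝ (Fin n) => v j) habp
      have hpj : p j = (((j:ℕ):ℝ)+1)/((n:ℝ)+1) := by rw [hp]
      rw [hzj j] at h'
      linarith [h', hpj.symm ▸ h']
    rw [mem_smul_Tsimplex hμpos] at haa
    obtain ⟨h1', h2'⟩ := haa
    apply deep_hole n hn hlt z
    · rw [← Finset.sum_congr rfl (fun j _ => haj j)]
      exact h1'
    · intro j
      rw [← Finset.sum_congr rfl (fun k _ => haj k), ← haj j]
      exact h2' j
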